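/- Let (a_t) and (ε_t) be sequences of nonnegative real numbers with ε_t → 0 as t → ∞, and suppose that for every integer t ≥ 5, a_t ≤ ((t−3)/(t+1)) · a_{t−1} + (4/(t+1)) · ε_t. Then a_t → 0 as t → ∞. -/

import Mathlib

/-- Recursive norm-inequality lemma: if nonnegative reals `a t` satisfy
`a t ≤ ((t−3)/(t+1)) a (t−1) + (4/(t+1)) ε t` for all `t ≥ 5` with nonnegative
`ε t → 0`, then `a t → 0`. -/
theorem error_recursion_tendsto_zero
    (a ε : ℕ → ℝ) (ha : ∀ t, 0 ≤ a t) (hε : ∀ t, 0 ≤ ε t)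
    (hεlim : Filter.Tendsto ε Filter.atTop (nhds 0))
    (hrec : ∀ t : ℕ, 5 ≤ t →
      a t ≤ (((t : ℝ) - 3) / ((t : ℝ) + 1)) * a (t - 1)
        + ((4 : ℝ) / ((t : ℝ) + 1)) * ε t) :
    Filter.Tendsto a Filter.atTop (nhds 0) := by
  rw [Metric.tendsto_atTop]
  intro δ hδ
  rw [Metric.tendsto_atTop] at hεlim
  obtain ⟨N₀, hN₀⟩ := hεlim (δ / 8) (by linarith)
  set N : ℕ := max N₀ 5 with hNdef
  have hN5 : 5 ≤ N := le_max_right _ _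
  have hεN : ∀ t, N ≤ t → ε t ≤ δ / 8 := by
    intro t ht
    have h := hN₀ t (le_trans (le_max_left _ _) ht)
    rw [Real.dist_0_eq_abs, abs_of_nonneg (hε t)] at h
    linarith
  set P : ℕ → ℝ := fun t => ((t : ℝ) - 2) * ((t : ℝ) - 1) * (t : ℝ) * ((t : ℝ) + 1)
    with hPdef
  have hPpos : ∀ t : ℕ, 5 ≤ t → 0 < P t := by
    intro t ht
    have h5 : (5 : ℝ) ≤ (t : ℝ) := by exact_mod_cast ht
    simp only [hPdef]
    have := mul_pos (mul_pos (mul_pos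
      (by linarith : (0:ℝ) < (t:ℝ) - 2) (by linarith : (0:ℝ) < (t:ℝ) - 1))
      (by linarith : (0:ℝ) < (t:ℝ))) (by linarith : (0:ℝ) < (t:ℝ) + 1)
    linarith
  have hPt : ∀ t : ℕ, 5 ≤ t → (t : ℝ) ≤ P t := by
    intro t ht
    have h5 : (5 : ℝ) ≤ (t : ℝ) := by exact_mod_cast ht
    simp only [hPdef]
    have hfac : 1 ≤ ((t:ℝ) - 2) * ((t:ℝ) - 1) * ((t:ℝ) + 1) := by
      nlinarith [mul_pos (by linarith : (0:ℝ) < (t:ℝ) - 2)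
        (by linarith : (0:ℝ) < (t:ℝ) - 1), sq_nonneg ((t:ℝ) - 5)]
    nlinarith
  have key : ∀ t, N ≤ t → P t * a t ≤ P N * a N + δ / 8 * (P t - P N) := by
    intro t ht
    induction t, ht using Nat.le_induction with
    | base => simp
    | succ n hn ih =>
      have hn5 : 5 ≤ n := le_trans hN5 hn
      have hnR : (5 : ℝ) ≤ (n : ℝ) := by exact_mod_cast hn5
      have hrec' := hrec (n + 1) (by omega)
      have hsub : n + 1 - 1 = n := rfl
      rw [hsub] at hrec'
      push_cast at hrec'
      have hεb : ε (n + 1) ≤ δ / 8 := hεN (n + 1) (by omega)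
      have hpos : (0 : ℝ) < (n : ℝ) + 1 + 1 := by linarith
      have hd : ((n : ℝ) + 1 + 1) ≠ 0 := ne_of_gt hpos
      have h1 : a (n + 1) * ((n : ℝ) + 1 + 1)
          ≤ ((n : ℝ) + 1 - 3) * a n + 4 * ε (n + 1) := by
        have h := hrec'
        rw [div_mul_eq_mul_div, div_mul_eq_mul_div, ← add_div,
          le_div_iff₀ hpos] at h
        linarith
      have hQ : (0 : ℝ) ≤ ((n : ℝ) - 1) * (n : ℝ) * ((n : ℝ) + 1) := by
        have := mul_nonneg (mul_nonneg
          (by linarith : (0:ℝ) ≤ (n:ℝ) - 1) (by linarith : (0:ℝ) ≤ (n:ℝ)))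
          (by linarith : (0:ℝ) ≤ (n:ℝ) + 1)
        linarith
      have H1 := mul_le_mul_of_nonneg_left h1 hQ
      have H3 := mul_le_mul_of_nonneg_left hεb (by linarith :
        (0 : ℝ) ≤ 4 * (((n : ℝ) - 1) * (n : ℝ) * ((n : ℝ) + 1)))
      simp only [hPdef] at ih ⊢
      push_cast
      nlinarith [H1, H3, ih]
  obtain ⟨M₁, hM₁⟩ := exists_nat_gt (8 * (P N * a N) / δ)
  refine ⟨max N M₁, fun t ht => ?_⟩
  have htN : N ≤ t := le_trans (le_max_left _ _) ht
  have htM : M₁ ≤ t := le_trans (le_max_right _ _) ht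
  have ht5 : 5 ≤ t := le_trans hN5 htN
  have hPtpos := hPpos t ht5
  have hPNpos := hPpos N hN5
  have hPtt := hPt t ht5
  have hkey := key t htN
  have hC : 8 * (P N * a N) < (M₁ : ℝ) * δ := by
    rw [div_lt_iff₀ hδ] at hM₁; linarith
  have htMR : (M₁ : ℝ) ≤ (t : ℝ) := by exact_mod_cast htM
  rw [Real.dist_0_eq_abs, abs_of_nonneg (ha t)]
  -- show a t < δ, equivalently P t * a t < δ * P t
  have hfin : P t * a t < δ * P t := by
    have h1 : (M₁ : ℝ) * δ ≤ (t : ℝ) * δ :=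
      mul_le_mul_of_nonneg_right htMR (le_of_lt hδ)
    have h2 : (t : ℝ) * δ ≤ P t * δ :=
      mul_le_mul_of_nonneg_right hPtt (le_of_lt hδ)
    have haN := ha N
    nlinarith [mul_pos hδ hPNpos]
  have := (mul_lt_mul_iff_right₀ hPtpos).mp (by linarith : P t * a t < P t * δ)
  linarith
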